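/- Let A be an artinian abelian category that is O-linear over a discrete valuation ring O with uniformizer ϖ. Let Q be the full subcategory of ϖ-divisible objects (those for which ϖ·1_A is an epimorphism) and T the full subcategory of ϖ-torsion objects. Then (Q, T) is a co-hereditary torsion theory on A, i.e. (Q, T) is a torsion theory and Q is stable under quotients. -/

import Mathlib

open CategoryTheory Limits


/-- An object `X` of an `O`-linear category is of `ϖ`-torsion if some power of `ϖ`
annihilates its identity. -/
def IsPiTorsion {O : Type*} [CommRing O] (ϖ : O) {A : Type*} [Category A] [Preadditive A]
    [Linear O A] (X : A) : Prop :=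
  ∃ N : ℕ, (ϖ ^ N : O) • (𝟙 X) = 0

/-- An object `X` is `ϖ`-divisible if multiplication by `ϖ` on `X` is an epimorphism. -/
def IsPiDivisible {O : Type*} [CommRing O] (ϖ : O) {A : Type*} [Category A] [Preadditive A]
    [Linear O A] (X : A) : Prop :=
  Epi ((ϖ : O) • (𝟙 X))

section Aux

variable {O : Type*} [CommRing O] {A : Type*} [Category A] [Preadditive A] [Linear O A]

lemma smul_id_comp_smul_id {X : A} (a b : O) :
    (a • 𝟙 X) ≫ (b • 𝟙 X) = (a * b) • 𝟙 X := by
  rw [Linear.smul_comp, Linear.comp_smul, Category.comp_id, smul_smul]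

lemma epi_pow_smul_id {X : A} (ϖ : O) (h : Epi ((ϖ : O) • 𝟙 X)) (N : ℕ) :
    Epi ((ϖ ^ N : O) • 𝟙 X) := by
  induction N with
  | zero => simpa using inferInstanceAs (Epi (𝟙 X))
  | succ n ih =>
      have : ((ϖ ^ (n+1) : O) • 𝟙 X) = ((ϖ : O) • 𝟙 X) ≫ ((ϖ ^ n : O) • 𝟙 X) := by
        rw [smul_id_comp_smul_id, pow_succ']
      rw [this]
      exact @epi_comp _ _ _ _ _ _ h _ ih

end Aux

theorem divisible_torsion_is_cohereditary_torsion_theory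
    (O : Type*) [CommRing O] [IsDomain O] [IsDiscreteValuationRing O]
    (ϖ : O) (hϖ : Irreducible ϖ)
    (A : Type*) [Category A] [Abelian A] [Linear O A]
    [∀ X : A, IsArtinianObject X] :
    -- (Q, T) is a torsion theory:
    (∀ (Q T : A) (f : Q ⟶ T), IsPiDivisible ϖ Q → IsPiTorsion ϖ T → f = 0) ∧
    (∀ X : A, ∃ (Q T : A) (i : Q ⟶ X) (p : X ⟶ T) (w : i ≫ p = 0),
      IsPiDivisible ϖ Q ∧ IsPiTorsion ϖ T ∧ (ShortComplex.mk i p w).ShortExact) ∧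
    -- and it is co-hereditary: the divisible class is stable under quotients:
    (∀ (X Y : A) (p : X ⟶ Y), Epi p → IsPiDivisible ϖ X → IsPiDivisible ϖ Y) := by
  refine ⟨?_, ?_, ?_⟩
  · -- Hom vanishing
    rintro Q T f hQ ⟨N, hN⟩
    have hepi : Epi ((ϖ ^ N : O) • 𝟙 Q) := epi_pow_smul_id ϖ hQ N
    have : ((ϖ ^ N : O) • 𝟙 Q) ≫ f = 0 := by
      rw [Linear.smul_comp, Category.id_comp, ← Category.comp_id f, ← Linear.comp_smul, hN,
        Limits.comp_zero]
    exact zero_of_epi_comp _ this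
  · -- decomposition
    intro X
    -- the decreasing chain of images of ϖ^n
    set g : ℕ → (X ⟶ X) := fun n => (ϖ ^ n : O) • 𝟙 X with hg
    set S : ℕ → Subobject X := fun n => imageSubobject (g n) with hS
    have hanti : ∀ n, S (n + 1) ≤ S n := by
      intro n
      have : g (n + 1) = ((ϖ : O) • 𝟙 X) ≫ g n := by
        simp only [hg, smul_id_comp_smul_id, pow_succ']
      rw [hS]
      dsimp only
      rw [this]
      exact imageSubobject_comp_le _ (g n)
    -- find a stabilization point
    have hwf := (wellFounded_lt (α := Subobject X))
    obtain ⟨N, hN⟩ : ∃ N, S (N + 1) = S N := by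
      by_contra hc
      push_neg at hc
      have hlt : ∀ n, S (n + 1) < S n := fun n => lt_of_le_of_ne (hanti n) (hc n)
      exact (RelEmbedding.natGT S hlt).not_wellFounded hwf
    refine ⟨(S N : A), cokernel (S N).arrow, (S N).arrow, cokernel.π _, cokernel.condition _,
      ?_, ?_, ?_⟩
    · -- divisibility
      have le1 : S (N + 1) ≤ S N := hanti N
      have le2 : S N ≤ S (N + 1) := le_of_eq hN.symm
      set u : ((S (N+1) : A) ⟶ (S N : A)) := Subobject.ofLE _ _ le1 with hu
      set w : ((S N : A) ⟶ (S (N+1) : A)) := Subobject.ofLE _ _ le2 with hw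
      have hwu : w ≫ u = 𝟙 _ := by
        rw [← cancel_mono (S N).arrow, hu, hw, Category.assoc, Subobject.ofLE_arrow,
          Subobject.ofLE_arrow, Category.id_comp]
      set k : X ⟶ (S N : A) := factorThruImageSubobject (g N) with hk
      set f' : X ⟶ (S (N+1) : A) := factorThruImageSubobject (g (N+1)) with hf'
      have key : f' ≫ u = k ≫ ((ϖ : O) • 𝟙 (S N : A)) := by
        rw [← cancel_mono (S N).arrow, Category.assoc, Category.assoc, hu,
          Subobject.ofLE_arrow]
        have h1 : f' ≫ (S (N+1)).arrow = g (N+1) := imageSubobject_arrow_comp _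
        have h2 : ((ϖ : O) • 𝟙 (S N : A)) ≫ (S N).arrow = (ϖ : O) • (S N).arrow := by
          rw [Linear.smul_comp, Category.id_comp]
        rw [h1, h2, Linear.comp_smul]
        have h3 : k ≫ (S N).arrow = g N := imageSubobject_arrow_comp _
        rw [h3, hg]
        dsimp only
        rw [smul_smul, ← pow_succ']
      have hsplit : Epi u := by
        constructor
        intro Z a b hab
        have := congrArg (fun t => w ≫ t) hab
        simpa [reassoc_of% hwu, hwu] using this
      have : Epi (f' ≫ u) := epi_comp _ _
      rw [key] at this
      exact epi_of_epi k _
    · -- torsion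
      refine ⟨N, ?_⟩
      have hcomm : ((ϖ ^ N : O) • 𝟙 X) ≫ cokernel.π (S N).arrow =
          cokernel.π (S N).arrow ≫ ((ϖ ^ N : O) • 𝟙 (cokernel (S N).arrow)) := by
        rw [Linear.smul_comp, Linear.comp_smul, Category.id_comp, Category.comp_id]
      have hz : ((ϖ ^ N : O) • 𝟙 X) ≫ cokernel.π (S N).arrow = 0 := by
        have : ((ϖ ^ N : O) • 𝟙 X) =
            factorThruImageSubobject (g N) ≫ (S N).arrow := (imageSubobject_arrow_comp _).symm
        rw [this, Category.assoc, cokernel.condition, Limits.comp_zero]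
      rw [← cancel_epi (cokernel.π (S N).arrow), Limits.comp_zero, ← hcomm, hz]
    · -- short exact
      refine ⟨?_⟩
      exact ShortComplex.exact_of_g_is_cokernel _ (cokernelIsCokernel _)
  · -- cohereditary
    intro X Y p hp hX
    haveI : Epi ((ϖ : O) • 𝟙 X) := hX
    have : p ≫ ((ϖ : O) • 𝟙 Y) = ((ϖ : O) • 𝟙 X) ≫ p := by
      rw [Linear.comp_smul, Linear.smul_comp, Category.comp_id, Category.id_comp]
    have hE : Epi (((ϖ : O) • 𝟙 X) ≫ p) := epi_comp _ _
    rw [← this] at hE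
    exact epi_of_epi p _
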